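/- Let X be a complex Banach space with Fourier cotype q ≥ 2 with constant C, i.e., (∑_{k=1}^N ‖x_k‖^q)^{1/q} ≤ C (∫_𝕋 ‖∑_{k=1}^N x_k z^k‖^{q'} dz)^{1/q'} for all finite sequences in X (1/q + 1/q' = 1). Then for every finitely supported family (x_α)_{α ∈ ℕ₀^{(ℕ)}} of vectors in X (with arbitrary, not necessarily homogeneous, multi-indices) one has (∑_α ‖x_α‖^q)^{1/q} ≤ C (∫_{𝕋^N} ‖∑_α x_α z^α‖^{q'} dz)^{1/q'}. -/

import Mathlib

open MeasureTheory

/-- The point `e^{2πit}` on the unit circle `𝕋 ⊆ ℂ`. -/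
noncomputable def torus (t : ℝ) : ℂ := Complex.exp (2 * Real.pi * Complex.I * t)

/-- The unit cube `[0,1]^N`, parametrizing `𝕋^N` (with normalized Haar measure = volume). -/
def cube (N : ℕ) : Set (Fin N → ℝ) := Set.univ.pi fun _ => Set.Icc (0:ℝ) 1

section Aux

lemma torus_add (s t : ℝ) : torus (s + t) = torus s * torus t := by
  rw [torus, torus, torus, ← Complex.exp_add]
  congr 1; push_cast; ring

lemma norm_torus (t : ℝ) : ‖torus t‖ = 1 := by
  have h : (2 * Real.pi * Complex.I * t : ℂ) = ((2 * Real.pi * t : ℝ) : ℂ) * Complex.I := by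
    push_cast; ring
  rw [torus, h, Complex.norm_exp_ofReal_mul_I]

lemma torus_nat_mul (t : ℝ) (n : ℕ) : torus (t * n) = torus t ^ n := by
  rw [torus, torus, ← Complex.exp_nat_mul]
  congr 1; push_cast; ring

lemma continuous_torus : Continuous torus :=
  Complex.continuous_exp.comp (continuous_const.mul Complex.continuous_ofReal)

lemma torus_coe (t : ℝ) : ((AddCircle.toCircle (t : AddCircle (1:ℝ)) : Circle) : ℂ) = torus t := by
  rw [AddCircle.toCircle_apply_mk, Circle.coe_exp, torus]
  congr 1; push_cast; ring

lemma prod_torus_shift {N : ℕ} (b : ℕ) (s : Fin N → ℝ) (t : ℝ) (α : Fin N → ℕ) :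
    (∏ j, torus (s j + t * (b : ℝ) ^ (j : ℕ)) ^ α j)
      = (∏ j, torus (s j) ^ α j) * torus t ^ (∑ j, α j * b ^ (j : ℕ)) := by
  calc (∏ j, torus (s j + t * (b : ℝ) ^ (j : ℕ)) ^ α j)
      = ∏ j, (torus (s j) ^ α j * torus t ^ (α j * b ^ (j : ℕ))) := by
        refine Finset.prod_congr rfl fun j _ => ?_
        have h1 : torus (s j + t * (b : ℝ) ^ (j : ℕ))
            = torus (s j) * torus t ^ (b ^ (j : ℕ)) := by
          rw [torus_add]
          congr 1
          have : t * (b : ℝ) ^ (j : ℕ) = t * ((b ^ (j : ℕ) : ℕ) : ℝ) := by push_cast; ring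
          rw [this, torus_nat_mul]
        rw [h1, mul_pow, ← pow_mul, mul_comm (b ^ (j : ℕ)) (α j)]
    _ = (∏ j, torus (s j) ^ α j) * ∏ j, torus t ^ (α j * b ^ (j : ℕ)) :=
        Finset.prod_mul_distrib
    _ = (∏ j, torus (s j) ^ α j) * torus t ^ (∑ j, α j * b ^ (j : ℕ)) := by
        rw [Finset.prod_pow_eq_pow_sum]

lemma digit_sum_lt {b : ℕ} (hb : 0 < b) : ∀ {N : ℕ} (f : Fin N → ℕ), (∀ j, f j < b) →
    ∑ j, f j * b ^ (j : ℕ) < b ^ N := by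
  intro N
  induction N with
  | zero => intro f _; simpa using hb
  | succ n ih =>
    intro f hf
    rw [Fin.sum_univ_castSucc]
    simp only [Fin.coe_castSucc, Fin.val_last]
    have h1 : ∑ j : Fin n, f j.castSucc * b ^ (j : ℕ) < b ^ n := by
      simpa using ih (fun j => f j.castSucc) (fun j => hf _)
    have h2 : f (Fin.last n) + 1 ≤ b := hf _
    calc ∑ j : Fin n, f j.castSucc * b ^ (j : ℕ) + f (Fin.last n) * b ^ n
        < (1 + f (Fin.last n)) * b ^ n := by rw [add_mul, one_mul]; omega
      _ ≤ b * b ^ n := Nat.mul_le_mul_right _ (by omega)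
      _ = b ^ (n + 1) := by rw [pow_succ]; ring

lemma digit_sum_inj {b : ℕ} : ∀ {N : ℕ} (f g : Fin N → ℕ), (∀ j, f j < b) → (∀ j, g j < b) →
    (∑ j, f j * b ^ (j : ℕ)) = (∑ j, g j * b ^ (j : ℕ)) → f = g := by
  intro N
  induction N with
  | zero => intro f g _ _ _; funext j; exact j.elim0
  | succ n ih =>
    intro f g hf hg h
    have e : ∀ (h : Fin (n + 1) → ℕ),
        ∑ j, h j * b ^ (j : ℕ) = h 0 + b * ∑ j : Fin n, h j.succ * b ^ (j : ℕ) := by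
      intro h
      rw [Fin.sum_univ_succ, Finset.mul_sum]
      simp only [Fin.val_zero, pow_zero, mul_one, Fin.val_succ]
      congr 1
      refine Finset.sum_congr rfl fun j _ => ?_
      rw [pow_succ]; ring
    rw [e f, e g] at h
    have hbpos : 0 < b := Nat.pos_of_ne_zero (by intro hb0; subst hb0; exact Nat.not_lt_zero _ (hf 0))
    have h0 : f 0 = g 0 := by
      have := congrArg (· % b) h
      simp only [Nat.add_mul_mod_self_left] at this
      rwa [Nat.mod_eq_of_lt (hf 0), Nat.mod_eq_of_lt (hg 0)] at this
    have h1 : ∑ j : Fin n, f j.succ * b ^ (j : ℕ) = ∑ j : Fin n, g j.succ * b ^ (j : ℕ) := by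
      rw [h0] at h
      exact Nat.eq_of_mul_eq_mul_left hbpos (by omega)
    have := ih (fun j => f j.succ) (fun j => g j.succ) (fun j => hf _) (fun j => hg _) h1
    funext j
    refine Fin.cases h0 (fun i => ?_) j
    exact congrFun this i

lemma volume_cube (N : ℕ) : volume (cube N) = 1 := by
  rw [cube, volume_pi_pi]
  simp [Real.volume_Icc]

lemma restrict_cube (N : ℕ) :
    (volume : Measure (Fin N → ℝ)).restrict (cube N)
      = Measure.pi (fun _ : Fin N => (volume : Measure ℝ).restrict (Set.Icc 0 1)) := by
  refine (Measure.pi_eq (μ := fun _ : Fin N => (volume : Measure ℝ).restrict (Set.Icc 0 1))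
    fun s hs => ?_).symm
  rw [Measure.restrict_apply (MeasurableSet.univ_pi hs), cube, ← Set.pi_inter_distrib,
    volume_pi_pi]
  exact Finset.prod_congr rfl fun i _ => (Measure.restrict_apply (hs i)).symm

lemma integral_cube {N : ℕ} (G : (Fin N → AddCircle (1:ℝ)) → ℝ) (hG : Continuous G) :
    (∫ t in cube N, G (fun j => (t j : AddCircle (1:ℝ))))
      = ∫ u, G u ∂(Measure.pi fun _ : Fin N => (volume : Measure (AddCircle (1:ℝ)))) := by
  have hmp : MeasurePreserving (fun (t : Fin N → ℝ) (j : Fin N) => ((t j : AddCircle (1:ℝ))))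
      (Measure.pi fun _ : Fin N => (volume : Measure ℝ).restrict (Set.Ioc 0 1))
      (Measure.pi fun _ : Fin N => (volume : Measure (AddCircle (1:ℝ)))) :=
    measurePreserving_pi _ _ (fun _ => by simpa using AddCircle.measurePreserving_mk 1 0)
  have hIoc : ((volume : Measure ℝ).restrict (Set.Icc (0:ℝ) 1))
      = (volume : Measure ℝ).restrict (Set.Ioc 0 1) :=
    (Measure.restrict_congr_set Ioc_ae_eq_Icc).symm
  rw [restrict_cube, hIoc, ← hmp.map_eq,
    integral_map hmp.aemeasurable hG.aestronglyMeasurable]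

lemma integral_cube_add {N : ℕ} (G : (Fin N → AddCircle (1:ℝ)) → ℝ) (hG : Continuous G)
    (v : Fin N → ℝ) :
    (∫ t in cube N, G (fun j => ((t j + v j : ℝ) : AddCircle (1:ℝ))))
      = ∫ t in cube N, G (fun j => (t j : AddCircle (1:ℝ))) := by
  have h1 : ∀ t : Fin N → ℝ, (fun j => ((t j + v j : ℝ) : AddCircle (1:ℝ)))
      = (fun j => ((v j : ℝ) : AddCircle (1:ℝ))) + fun j => ((t j : ℝ) : AddCircle (1:ℝ)) := by
    intro t; funext j
    show ((t j + v j : ℝ) : AddCircle (1:ℝ)) = (v j : ℝ) + ((t j : ℝ) : AddCircle (1:ℝ))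
    rw [add_comm]
    rfl
  calc (∫ t in cube N, G (fun j => ((t j + v j : ℝ) : AddCircle (1:ℝ))))
      = ∫ t in cube N, (fun u => G ((fun j => ((v j : ℝ) : AddCircle (1:ℝ))) + u))
          (fun j => (t j : AddCircle (1:ℝ))) := by
        refine integral_congr_ae (Filter.Eventually.of_forall fun t => ?_)
        simp only [h1 t]
    _ = ∫ u, G ((fun j => ((v j : ℝ) : AddCircle (1:ℝ))) + u)
          ∂(Measure.pi fun _ : Fin N => (volume : Measure (AddCircle (1:ℝ)))) :=
        integral_cube _ (hG.comp (continuous_const.add continuous_id))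
    _ = ∫ u, G u ∂(Measure.pi fun _ : Fin N => (volume : Measure (AddCircle (1:ℝ)))) :=
        integral_add_left_eq_self _ _
    _ = ∫ t in cube N, G (fun j => (t j : AddCircle (1:ℝ))) := (integral_cube G hG).symm

end Aux

/-- If `X` has Fourier cotype `q ≥ 2` with constant `C` (one-variable inequality), then the
analogous inequality, with the same constant `C`, holds for every finitely supported family of
coefficients indexed by arbitrary multi-indices (not necessarily homogeneous). -/
theorem fourier_cotype_implies_analytic_cotype
    (X : Type*) [NormedAddCommGroup X] [NormedSpace ℂ X] [CompleteSpace X]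
    (q q' : ℝ) (hq : 2 ≤ q) (hq' : 1/q + 1/q' = 1) (C : ℝ) (hC : 0 < C)
    (hfour : ∀ (M : ℕ) (x : ℕ → X),
      (∑ k ∈ Finset.Icc 1 M, ‖x k‖ ^ q) ^ (1/q)
        ≤ C * (∫ t in Set.Icc (0:ℝ) 1,
            ‖∑ k ∈ Finset.Icc 1 M, (torus t) ^ k • x k‖ ^ q') ^ (1/q')) :
    ∀ (N : ℕ) (A : Finset (Fin N → ℕ)) (x : (Fin N → ℕ) → X),
      (∑ α ∈ A, ‖x α‖ ^ q) ^ (1/q)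
        ≤ C * (∫ t in cube N, ‖∑ α ∈ A, (∏ j, torus (t j) ^ α j) • x α‖ ^ q') ^ (1/q') := by
  classical
  intro N A x
  have hq0 : (0:ℝ) < q := by linarith
  have hq'0 : (0:ℝ) < q' := by
    have h1 : 1/q < 1 := by
      rw [div_lt_one hq0]; linarith
    have h2 : 0 < 1/q' := by linarith
    exact one_div_pos.mp h2
  have hq'ne : q' ≠ 0 := ne_of_gt hq'0
  -- digits
  set m : ℕ := A.sup (fun α => Finset.univ.sup α) with hm
  set b : ℕ := m + 1 with hbdef
  have hbpos : 0 < b := Nat.succ_pos m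
  have hdig : ∀ α ∈ A, ∀ j, α j < b := by
    intro α hα j
    have h1 : α j ≤ Finset.univ.sup α := Finset.le_sup (Finset.mem_univ j)
    have h2 : Finset.univ.sup α ≤ m := Finset.le_sup (f := fun α => Finset.univ.sup α) hα
    omega
  set φ : (Fin N → ℕ) → ℕ := fun α => ∑ j, α j * b ^ (j : ℕ) with hφ
  set M : ℕ := b ^ N with hM
  set F : (Fin N → ℝ) → X := fun t => ∑ α ∈ A, (∏ j, torus (t j) ^ α j) • x α with hF
  set c : Fin N → ℝ := fun j => (b : ℝ) ^ (j : ℕ) with hc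
  set L : ℝ := (∑ α ∈ A, ‖x α‖ ^ q) ^ (1/q) with hL
  set f : (Fin N → ℝ) → ℝ → ℝ := fun s t => ‖F (s + t • c)‖ ^ q' with hf
  set I : ℝ := ∫ t in cube N, ‖F t‖ ^ q' with hI
  -- continuity of F and a bound
  have hFcont : Continuous F := by
    rw [hF]
    refine continuous_finset_sum _ fun α _ => Continuous.smul ?_ continuous_const
    exact continuous_finset_prod _ fun j _ =>
      (continuous_torus.comp (continuous_apply j)).pow _
  have hFbd : ∀ t, ‖F t‖ ≤ ∑ α ∈ A, ‖x α‖ := by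
    intro t
    simp only [hF]
    refine le_trans (norm_sum_le _ _) (Finset.sum_le_sum fun α _ => ?_)
    rw [norm_smul]
    have h1 : ‖∏ j, torus (t j) ^ α j‖ = 1 := by
      rw [norm_prod]
      simp only [norm_pow, norm_torus, one_pow, Finset.prod_const_one]
    rw [h1, one_mul]
  -- the pointwise one-variable inequality
  have key : ∀ s : Fin N → ℝ, L ≤ C * (∫ t in Set.Icc (0:ℝ) 1, f s t) ^ (1/q') := by
    intro s
    set w : (Fin N → ℕ) → ℂ := fun α => ∏ j, torus (s j) ^ α j with hw
    set y : ℕ → X := fun k => ∑ α ∈ A.filter (fun α => φ α + 1 = k), w α • x α with hy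
    have hwnorm : ∀ α, ‖w α‖ = 1 := by
      intro α
      simp only [hw]
      rw [norm_prod]
      simp only [norm_pow, norm_torus, one_pow, Finset.prod_const_one]
    have hmaps : ∀ α ∈ A, φ α + 1 ∈ Finset.Icc 1 M := by
      intro α hα
      rw [Finset.mem_Icc]
      exact ⟨Nat.le_add_left 1 _, Nat.succ_le_of_lt (digit_sum_lt hbpos α (hdig α hα))⟩
    have hLHS : ∑ k ∈ Finset.Icc 1 M, ‖y k‖ ^ q = ∑ α ∈ A, ‖x α‖ ^ q := by
      have h1 : ∀ k, ‖y k‖ ^ q = ∑ α ∈ A.filter (fun α => φ α + 1 = k), ‖x α‖ ^ q := by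
        intro k
        rcases Finset.eq_empty_or_nonempty (A.filter (fun α => φ α + 1 = k)) with h | ⟨α, hα⟩
        · simp only [hy, h, Finset.sum_empty, norm_zero]
          exact Real.zero_rpow (ne_of_gt hq0)
        · have hsing : A.filter (fun α => φ α + 1 = k) = {α} := by
            refine Finset.eq_singleton_iff_unique_mem.mpr ⟨hα, fun β hβ => ?_⟩
            have hb1 := Finset.mem_filter.mp hβ
            have hb2 := Finset.mem_filter.mp hα
            exact digit_sum_inj β α (hdig β hb1.1) (hdig α hb2.1) (by
              have e1 := hb1.2
              have e2 := hb2.2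
              simp only [hφ] at e1 e2 ⊢
              omega)
          simp only [hy, hsing, Finset.sum_singleton, norm_smul, hwnorm, one_mul]
      calc ∑ k ∈ Finset.Icc 1 M, ‖y k‖ ^ q
          = ∑ k ∈ Finset.Icc 1 M, ∑ α ∈ A.filter (fun α => φ α + 1 = k), ‖x α‖ ^ q :=
            Finset.sum_congr rfl fun k _ => h1 k
        _ = ∑ α ∈ A, ‖x α‖ ^ q := Finset.sum_fiberwise_of_maps_to hmaps _
    have hRHS : ∀ t : ℝ, ‖∑ k ∈ Finset.Icc 1 M, torus t ^ k • y k‖ = ‖F (s + t • c)‖ := by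
      intro t
      have h2 : ∑ k ∈ Finset.Icc 1 M, torus t ^ k • y k = torus t • F (s + t • c) := by
        calc ∑ k ∈ Finset.Icc 1 M, torus t ^ k • y k
            = ∑ k ∈ Finset.Icc 1 M, ∑ α ∈ A.filter (fun α => φ α + 1 = k),
                torus t ^ (φ α + 1) • (w α • x α) := by
              refine Finset.sum_congr rfl fun k _ => ?_
              simp only [hy]
              rw [Finset.smul_sum]
              refine Finset.sum_congr rfl fun α hα => ?_
              rw [(Finset.mem_filter.mp hα).2]
          _ = ∑ α ∈ A, torus t ^ (φ α + 1) • (w α • x α) :=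
              Finset.sum_fiberwise_of_maps_to hmaps _
          _ = torus t • F (s + t • c) := by
              simp only [hF, Finset.smul_sum]
              refine Finset.sum_congr rfl fun α _ => ?_
              rw [smul_smul, smul_smul]
              congr 1
              have h3 : (∏ j, torus ((s + t • c) j) ^ α j) = w α * torus t ^ φ α := by
                have h0 : ∀ j : Fin N, (s + t • c) j = s j + t * (b : ℝ) ^ (j : ℕ) := by
                  intro j
                  simp only [Pi.add_apply, Pi.smul_apply, smul_eq_mul, hc]
                calc (∏ j, torus ((s + t • c) j) ^ α j)
                    = ∏ j, torus (s j + t * (b : ℝ) ^ (j : ℕ)) ^ α j :=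
                      Finset.prod_congr rfl fun j _ => by rw [h0 j]
                  _ = (∏ j, torus (s j) ^ α j) * torus t ^ (∑ j, α j * b ^ (j : ℕ)) :=
                      prod_torus_shift b s t α
                  _ = w α * torus t ^ φ α := by simp only [hw, hφ]
              rw [h3, pow_succ]
              ring
      rw [h2, norm_smul, norm_torus, one_mul]
    have h4 := hfour M y
    rw [hLHS] at h4
    have h5 : (∫ t in Set.Icc (0:ℝ) 1, ‖∑ k ∈ Finset.Icc 1 M, torus t ^ k • y k‖ ^ q')
        = ∫ t in Set.Icc (0:ℝ) 1, f s t := by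
      refine integral_congr_ae (Filter.Eventually.of_forall fun t => ?_)
      simp only [hf]
      rw [hRHS t]
    rw [h5] at h4
    rw [hL]
    exact h4
  -- continuity and integrability of the double integrand
  have hfcont : Continuous (Function.uncurry f) := by
    simp only [hf, Function.uncurry]
    refine Continuous.rpow_const ?_ (fun _ => Or.inr hq'0.le)
    exact continuous_norm.comp
      (hFcont.comp (continuous_fst.add (continuous_snd.smul continuous_const)))
  haveI hfin1 : IsFiniteMeasure ((volume : Measure ℝ).restrict (Set.Icc (0:ℝ) 1)) :=
    ⟨by rw [Measure.restrict_apply_univ]; simp [Real.volume_Icc]⟩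
  haveI hfin2 : IsFiniteMeasure ((volume : Measure (Fin N → ℝ)).restrict (cube N)) :=
    ⟨by rw [Measure.restrict_apply_univ, volume_cube]; exact ENNReal.one_lt_top⟩
  have hIf : Integrable (Function.uncurry f)
      (((volume : Measure (Fin N → ℝ)).restrict (cube N)).prod
        ((volume : Measure ℝ).restrict (Set.Icc 0 1))) := by
    refine (integrable_const ((∑ α ∈ A, ‖x α‖) ^ q')).mono'
      hfcont.aestronglyMeasurable (Filter.Eventually.of_forall fun z => ?_)
    have h1 : Function.uncurry f z = ‖F (z.1 + z.2 • c)‖ ^ q' := rfl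
    rw [h1, Real.norm_of_nonneg (Real.rpow_nonneg (norm_nonneg _) _)]
    exact Real.rpow_le_rpow (norm_nonneg _) (hFbd _) hq'0.le
  have hinner : Integrable (fun s => ∫ t in Set.Icc (0:ℝ) 1, f s t)
      ((volume : Measure (Fin N → ℝ)).restrict (cube N)) := hIf.integral_prod_left
  -- the circle-group version of the integrand
  set G : (Fin N → AddCircle (1:ℝ)) → ℝ :=
    fun u => ‖∑ α ∈ A, (∏ j, ((AddCircle.toCircle (u j) : Circle) : ℂ) ^ α j) • x α‖ ^ q'
    with hG
  have hGF : ∀ t : Fin N → ℝ, G (fun j => (t j : AddCircle (1:ℝ))) = ‖F t‖ ^ q' := by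
    intro t
    simp only [hG, hF, torus_coe]
  have hGcont : Continuous G := by
    rw [hG]
    refine Continuous.rpow_const ?_ (fun _ => Or.inr hq'0.le)
    refine continuous_norm.comp (continuous_finset_sum _ fun α _ =>
      Continuous.smul (continuous_finset_prod _ fun j _ => ?_) continuous_const)
    exact (continuous_subtype_val.comp
      (AddCircle.continuous_toCircle.comp (continuous_apply j))).pow _
  have hinv : ∀ t : ℝ, (∫ s in cube N, f s t) = I := by
    intro t
    have h6 : ∀ s : Fin N → ℝ,
        f s t = G (fun j => ((s j + (t • c) j : ℝ) : AddCircle (1:ℝ))) := by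
      intro s
      simp only [hf]
      exact (hGF (s + t • c)).symm
    calc (∫ s in cube N, f s t)
        = ∫ s in cube N, G (fun j => ((s j + (t • c) j : ℝ) : AddCircle (1:ℝ))) :=
          integral_congr_ae (Filter.Eventually.of_forall fun s => h6 s)
      _ = ∫ s in cube N, G (fun j => (s j : AddCircle (1:ℝ))) :=
          integral_cube_add G hGcont (t • c)
      _ = I := by
          rw [hI]
          exact integral_congr_ae (Filter.Eventually.of_forall fun s => hGF s)
  -- averaging
  have hL0 : 0 ≤ L := by
    rw [hL]
    exact Real.rpow_nonneg
      (Finset.sum_nonneg fun α _ => Real.rpow_nonneg (norm_nonneg _) _) _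
  have hI0 : 0 ≤ I := by
    rw [hI]
    exact integral_nonneg fun t => Real.rpow_nonneg (norm_nonneg _) _
  have hstep : L ^ q' ≤ C ^ q' * I := by
    have h1 : ∀ s : Fin N → ℝ, L ^ q' ≤ C ^ q' * ∫ t in Set.Icc (0:ℝ) 1, f s t := by
      intro s
      have h2 : (0:ℝ) ≤ ∫ t in Set.Icc (0:ℝ) 1, f s t :=
        integral_nonneg fun t => by
          simp only [hf]; exact Real.rpow_nonneg (norm_nonneg _) _
      calc L ^ q' ≤ (C * (∫ t in Set.Icc (0:ℝ) 1, f s t) ^ (1/q')) ^ q' :=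
            Real.rpow_le_rpow hL0 (key s) hq'0.le
        _ = C ^ q' * ((∫ t in Set.Icc (0:ℝ) 1, f s t) ^ (1/q')) ^ q' :=
            Real.mul_rpow hC.le (Real.rpow_nonneg h2 _)
        _ = C ^ q' * ∫ t in Set.Icc (0:ℝ) 1, f s t := by
            rw [← Real.rpow_mul h2, one_div_mul_cancel hq'ne, Real.rpow_one]
    calc L ^ q' = ∫ _s in cube N, L ^ q' := by
          rw [integral_const]
          simp [Measure.restrict_apply_univ, volume_cube, measureReal_def]
      _ ≤ ∫ s in cube N, C ^ q' * ∫ t in Set.Icc (0:ℝ) 1, f s t :=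
          integral_mono (integrable_const _) (hinner.const_mul _) h1
      _ = C ^ q' * ∫ s in cube N, ∫ t in Set.Icc (0:ℝ) 1, f s t := integral_const_mul _ _
      _ = C ^ q' * ∫ t in Set.Icc (0:ℝ) 1, ∫ s in cube N, f s t := by
          rw [integral_integral_swap hIf]
      _ = C ^ q' * ∫ t in Set.Icc (0:ℝ) 1, I := by
          congr 1
          exact integral_congr_ae (Filter.Eventually.of_forall fun t => hinv t)
      _ = C ^ q' * I := by
          rw [integral_const]
          simp [Measure.restrict_apply_univ, Real.volume_Icc]
  have hfinal : L ≤ C * I ^ (1/q') := by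
    calc L = (L ^ q') ^ (1/q') := by
          rw [← Real.rpow_mul hL0, mul_one_div_cancel hq'ne, Real.rpow_one]
      _ ≤ (C ^ q' * I) ^ (1/q') :=
          Real.rpow_le_rpow (Real.rpow_nonneg hL0 _) hstep (by positivity)
      _ = C * I ^ (1/q') := by
          rw [Real.mul_rpow (Real.rpow_nonneg hC.le _) hI0, ← Real.rpow_mul hC.le,
            mul_one_div_cancel hq'ne, Real.rpow_one]
  exact hfinal
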